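/- Let F be a field, and X, Z disjoint finite variable types. Work in MvPolynomial (X ⊕ Z ⊕ Z) F, writing Z_i for the variables in the first Z-copy and W_i for the variables in the second Z-copy; for a polynomial p in the variables X ∪ {Z_i} let p* denote the polynomial obtained by renaming each Z_i to W_i. Let P be a finite set of polynomials in MvPolynomial.supported F (X ∪ {Z_i : i ∈ Z}), each of total degree at most d and with at most s monomials. Set P' := {p* : p ∈ P} ∪ {Z_i − W_i : i ∈ Z}. Then: (1) every element of P' either contains no Z_i-variable or has the form q + Z_i·q' with q, q' free of all Z_i-variables; (2) for every α : Z → {0,1}, there exists x : X → {0,1} making every p ∈ P vanish at (x, α) if and only if there exist x : X → {0,1} and w : Z → F making every element of P' vanish at (x, α, w); (3) for every p ∈ P there exist polynomials c_i (i ∈ Z), each with at most s·d monomials, such that p = p* + Σ_{i ∈ Z} c_i·(Z_i − W_i). -/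

import Mathlib

/-- Interpretation of a Boolean value in a field. -/
def boolToField (F : Type) [Field F] (b : Bool) : F := if b then 1 else 0

/-- The renaming that swaps the two copies of `Z` (sending each variable `Z_i`
to the corresponding fresh variable `W_i` and vice versa). -/
def swapZW {X Z : Type} : X ⊕ Z ⊕ Z → X ⊕ Z ⊕ Z :=
  Sum.elim Sum.inl (Sum.elim (Sum.inr ∘ Sum.inr) (Sum.inr ∘ Sum.inl))

open MvPolynomial Pointwise

section Aux
variable {σ : Type*} {R : Type*} [CommRing R]

lemma card_support_mul_le (p q : MvPolynomial σ R) :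
    (p * q).support.card ≤ p.support.card * q.support.card := by
  classical
  calc (p * q).support.card ≤ (p.support + q.support).card :=
        Finset.card_le_card (MvPolynomial.support_mul p q)
    _ ≤ _ := Finset.card_add_le

lemma card_support_X_pow_le (v : σ) (n : ℕ) :
    ((X v : MvPolynomial σ R) ^ n).support.card ≤ 1 := by
  classical
  rw [MvPolynomial.X_pow_eq_monomial, MvPolynomial.support_monomial]
  split <;> simp

lemma card_support_C_le (a : R) : ((C a : MvPolynomial σ R)).support.card ≤ 1 := by
  classical
  rw [show (C a : MvPolynomial σ R) = monomial 0 a by simp, MvPolynomial.support_monomial]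
  split <;> simp

lemma card_support_one_le : ((1 : MvPolynomial σ R)).support.card ≤ 1 := by
  simpa using card_support_C_le (1 : R)

lemma card_support_prod_le {α : Type*} (S : Finset α) (f : α → MvPolynomial σ R)
    (hf : ∀ a, (f a).support.card ≤ 1) : (∏ a ∈ S, f a).support.card ≤ 1 := by
  classical
  induction S using Finset.induction_on with
  | empty => simpa using card_support_one_le
  | @insert _ _ ha ih =>
      rw [Finset.prod_insert ha]
      calc _ ≤ _ := card_support_mul_le _ _
        _ ≤ 1 * 1 := Nat.mul_le_mul (hf _) ih
        _ = 1 := by ring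

lemma card_support_sum_le {α : Type*} (S : Finset α) (f : α → MvPolynomial σ R) :
    (∑ a ∈ S, f a).support.card ≤ ∑ a ∈ S, (f a).support.card := by
  classical
  calc (∑ a ∈ S, f a).support.card ≤ (S.biUnion fun a => (f a).support).card :=
        Finset.card_le_card MvPolynomial.support_sum
    _ ≤ _ := Finset.card_biUnion_le

lemma eval_congr_supported (p : MvPolynomial σ R) (s : Set σ)
    (hp : p ∈ MvPolynomial.supported R s) (e₁ e₂ : σ → R)
    (h : ∀ v ∈ s, e₁ v = e₂ v) : MvPolynomial.eval e₁ p = MvPolynomial.eval e₂ p := by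
  rw [MvPolynomial.supported_eq_range_rename, AlgHom.mem_range] at hp
  obtain ⟨q, rfl⟩ := hp
  rw [MvPolynomial.eval_rename, MvPolynomial.eval_rename]
  have : e₁ ∘ (Subtype.val : s → σ) = e₂ ∘ Subtype.val := funext fun v => h v v.2
  rw [this]

end Aux

section Tel
variable {F : Type} [Field F] {XX ZZ : Type} [Fintype ZZ]

lemma telescope (m : (XX ⊕ ZZ ⊕ ZZ) →₀ ℕ) (S : Finset (XX ⊕ ZZ ⊕ ZZ))
    (hS : ∀ v ∈ S, (∃ x, v = Sum.inl x) ∨ ∃ i, v = Sum.inr (Sum.inl i)) :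
    ∃ c : ZZ → MvPolynomial (XX ⊕ ZZ ⊕ ZZ) F,
      (∀ i, (c i).support.card ≤ m (Sum.inr (Sum.inl i))) ∧
      (∀ i, Sum.inr (Sum.inl i) ∉ S → c i = 0) ∧
      (∏ v ∈ S, X v ^ m v) - (∏ v ∈ S, X (swapZW v) ^ m v)
        = ∑ i : ZZ, c i * (X (Sum.inr (Sum.inl i)) - X (Sum.inr (Sum.inr i))) := by
  classical
  induction S using Finset.induction_on with
  | empty => exact ⟨0, by simp, by simp, by simp⟩
  | @insert a S ha ih =>
    obtain ⟨c, hcard, hzero, heq⟩ := ih fun v hv => hS v (Finset.mem_insert_of_mem hv)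
    rcases hS a (Finset.mem_insert_self a S) with ⟨x, rfl⟩ | ⟨j, rfl⟩
    · refine ⟨fun i => X (Sum.inl x) ^ m (Sum.inl x) * c i, ?_, ?_, ?_⟩
      · intro i
        calc _ ≤ _ := card_support_mul_le _ _
          _ ≤ 1 * (c i).support.card :=
            Nat.mul_le_mul_right _ (card_support_X_pow_le _ _)
          _ ≤ _ := by rw [one_mul]; exact hcard i
      · intro i hi
        dsimp only
        rw [hzero i fun h => hi (Finset.mem_insert_of_mem h), mul_zero]
      · rw [Finset.prod_insert ha, Finset.prod_insert ha]
        have hsw : swapZW (Sum.inl x : XX ⊕ ZZ ⊕ ZZ) = Sum.inl x := rfl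
        rw [hsw, ← mul_sub, heq, Finset.mul_sum]
        exact Finset.sum_congr rfl fun i _ => by ring
    · set e := m (Sum.inr (Sum.inl j)) with he
      set B := ∏ v ∈ S, (X v ^ m v : MvPolynomial (XX ⊕ ZZ ⊕ ZZ) F) with hB
      set B' := ∏ v ∈ S, (X (swapZW v) ^ m v : MvPolynomial (XX ⊕ ZZ ⊕ ZZ) F) with hB'
      set g := ∑ k ∈ Finset.range e,
        (X (Sum.inr (Sum.inl j)) : MvPolynomial (XX ⊕ ZZ ⊕ ZZ) F) ^ k *
          X (Sum.inr (Sum.inr j)) ^ (e - 1 - k) with hg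
      have hgcard : g.support.card ≤ e := by
        calc g.support.card ≤ ∑ k ∈ Finset.range e,
              ((X (Sum.inr (Sum.inl j)) : MvPolynomial (XX ⊕ ZZ ⊕ ZZ) F) ^ k *
                X (Sum.inr (Sum.inr j)) ^ (e - 1 - k)).support.card :=
              card_support_sum_le _ _
          _ ≤ ∑ _k ∈ Finset.range e, 1 := by
              refine Finset.sum_le_sum fun k _ => ?_
              calc _ ≤ _ := card_support_mul_le _ _
                _ ≤ 1 * 1 := Nat.mul_le_mul (card_support_X_pow_le _ _)
                    (card_support_X_pow_le _ _)
                _ = 1 := by ring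
          _ = e := by simp
      have hBcard : B.support.card ≤ 1 :=
        card_support_prod_le _ _ fun v => card_support_X_pow_le _ _
      have hcj : c j = 0 := hzero j ha
      refine ⟨Function.update
        (fun i => X (Sum.inr (Sum.inr j)) ^ e * c i) j (g * B), ?_, ?_, ?_⟩
      · intro i
        rcases eq_or_ne i j with rfl | hij
        · rw [Function.update_self]
          calc _ ≤ _ := card_support_mul_le g B
            _ ≤ e * 1 := Nat.mul_le_mul hgcard hBcard
            _ = e := by ring
        · rw [Function.update_of_ne hij]
          calc _ ≤ _ := card_support_mul_le _ _
            _ ≤ 1 * (c i).support.card :=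
              Nat.mul_le_mul_right _ (card_support_X_pow_le _ _)
            _ ≤ _ := by rw [one_mul]; exact hcard i
      · intro i hi
        have hij : i ≠ j := by
          rintro rfl; exact hi (Finset.mem_insert_self _ _)
        rw [Function.update_of_ne hij,
          hzero i fun h => hi (Finset.mem_insert_of_mem h), mul_zero]
      · have hsw : swapZW (Sum.inr (Sum.inl j) : XX ⊕ ZZ ⊕ ZZ) = Sum.inr (Sum.inr j) := rfl
        rw [Finset.prod_insert ha, Finset.prod_insert ha, hsw, ← hB, ← hB', ← he]
        have hgeom : g * (X (Sum.inr (Sum.inl j)) - X (Sum.inr (Sum.inr j)))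
            = X (Sum.inr (Sum.inl j)) ^ e - X (Sum.inr (Sum.inr j)) ^ e :=
          geom_sum₂_mul _ _ e
        have hstep : X (Sum.inr (Sum.inl j)) ^ e * B - X (Sum.inr (Sum.inr j)) ^ e * B'
            = (g * B) * (X (Sum.inr (Sum.inl j)) - X (Sum.inr (Sum.inr j)))
              + X (Sum.inr (Sum.inr j)) ^ e * (B - B') := by
          rw [show (g * B) * (X (Sum.inr (Sum.inl j)) - X (Sum.inr (Sum.inr j)))
            = (g * (X (Sum.inr (Sum.inl j)) - X (Sum.inr (Sum.inr j)))) * B by ring, hgeom]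
          ring
        rw [hstep, heq, Finset.mul_sum]
        have hdiff : ∀ i ∈ Finset.univ \ {j},
            Function.update (fun i => X (Sum.inr (Sum.inr j)) ^ e * c i) j (g * B) i *
              (X (Sum.inr (Sum.inl i)) - X (Sum.inr (Sum.inr i)))
            = X (Sum.inr (Sum.inr j)) ^ e *
              (c i * (X (Sum.inr (Sum.inl i)) - X (Sum.inr (Sum.inr i)))) := by
          intro i hi
          have hij : i ≠ j := by
            simpa using (Finset.mem_sdiff.mp hi).2
          rw [Function.update_of_ne hij]
          ring
        have hR : (∑ i : ZZ,
            Function.update (fun i => X (Sum.inr (Sum.inr j)) ^ e * c i) j (g * B) i *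
              (X (Sum.inr (Sum.inl i)) - X (Sum.inr (Sum.inr i))))
            = g * B * (X (Sum.inr (Sum.inl j)) - X (Sum.inr (Sum.inr j))) +
              ∑ i ∈ Finset.univ \ {j}, X (Sum.inr (Sum.inr j)) ^ e *
                (c i * (X (Sum.inr (Sum.inl i)) - X (Sum.inr (Sum.inr i)))) := by
          rw [Finset.sum_eq_add_sum_sdiff_singleton_of_mem (Finset.mem_univ j), Function.update_self,
            Finset.sum_congr rfl hdiff]
        have hL : (∑ i : ZZ, X (Sum.inr (Sum.inr j)) ^ e *
              (c i * (X (Sum.inr (Sum.inl i)) - X (Sum.inr (Sum.inr i)))))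
            = X (Sum.inr (Sum.inr j)) ^ e *
                (c j * (X (Sum.inr (Sum.inl j)) - X (Sum.inr (Sum.inr j)))) +
              ∑ i ∈ Finset.univ \ {j}, X (Sum.inr (Sum.inr j)) ^ e *
                (c i * (X (Sum.inr (Sum.inl i)) - X (Sum.inr (Sum.inr i)))) :=
          Finset.sum_eq_add_sum_sdiff_singleton_of_mem (Finset.mem_univ j) _
        rw [hR, hL, hcj]
        ring
end Tel

section Mon
variable {F : Type} [Field F] {XX ZZ : Type} [Fintype ZZ]

lemma monomial_step (m : (XX ⊕ ZZ ⊕ ZZ) →₀ ℕ) (a : F)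
    (hm : ∀ v ∈ m.support, (∃ x, v = Sum.inl x) ∨ ∃ i, v = Sum.inr (Sum.inl i)) :
    ∃ c : ZZ → MvPolynomial (XX ⊕ ZZ ⊕ ZZ) F,
      (∀ i, (c i).support.card ≤ m (Sum.inr (Sum.inl i))) ∧
      (monomial m a : MvPolynomial (XX ⊕ ZZ ⊕ ZZ) F)
        = rename swapZW (monomial m a) +
          ∑ i : ZZ, c i * (X (Sum.inr (Sum.inl i)) - X (Sum.inr (Sum.inr i))) := by
  classical
  obtain ⟨c, hcard, -, heq⟩ := telescope (F := F) m m.support hm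
  have hmon : (monomial m a : MvPolynomial (XX ⊕ ZZ ⊕ ZZ) F)
      = C a * ∏ v ∈ m.support, X v ^ m v := by
    rw [monomial_eq]; rfl
  have hren : (rename swapZW (monomial m a) : MvPolynomial (XX ⊕ ZZ ⊕ ZZ) F)
      = C a * ∏ v ∈ m.support, X (swapZW v) ^ m v := by
    rw [hmon, map_mul, map_prod, rename_C]
    simp
  refine ⟨fun i => C a * c i, ?_, ?_⟩
  · intro i
    calc _ ≤ _ := card_support_mul_le _ _
      _ ≤ 1 * (c i).support.card := Nat.mul_le_mul_right _ (card_support_C_le a)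
      _ ≤ _ := by rw [one_mul]; exact hcard i
  · have h2 := congrArg (fun q => (C a : MvPolynomial (XX ⊕ ZZ ⊕ ZZ) F) * q) heq
    rw [mul_sub, Finset.mul_sum] at h2
    dsimp only
    rw [hren, hmon]
    have h3 : ∑ i : ZZ, (C a * c i) * (X (Sum.inr (Sum.inl i)) - X (Sum.inr (Sum.inr i)))
        = ∑ i : ZZ, C a * (c i * (X (Sum.inr (Sum.inl i)) - X (Sum.inr (Sum.inr i)))) :=
      Finset.sum_congr rfl fun i _ => by ring
    rw [h3, ← h2]
    ring

lemma part3 (p : MvPolynomial (XX ⊕ ZZ ⊕ ZZ) F) (d s : ℕ)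
    (hsupp : p ∈ MvPolynomial.supported F
      (Set.range (Sum.inl : XX → XX ⊕ ZZ ⊕ ZZ) ∪
        Set.range ((Sum.inr ∘ Sum.inl) : ZZ → XX ⊕ ZZ ⊕ ZZ)))
    (hdeg : p.totalDegree ≤ d) (hsparse : p.support.card ≤ s) :
    ∃ c : ZZ → MvPolynomial (XX ⊕ ZZ ⊕ ZZ) F,
      (∀ i, (c i).support.card ≤ s * d) ∧
      p = rename swapZW p +
        ∑ i : ZZ, c i * (X (Sum.inr (Sum.inl i)) - X (Sum.inr (Sum.inr i))) := by
  classical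
  have hm : ∀ m ∈ p.support, ∀ v ∈ m.support,
      (∃ x, v = Sum.inl x) ∨ ∃ i, v = Sum.inr (Sum.inl i) := by
    intro m hmp v hv
    have hvars : v ∈ p.vars := (mem_vars v).mpr ⟨m, hmp, hv⟩
    have hv2 := (mem_supported.mp hsupp) hvars
    rcases hv2 with ⟨x, rfl⟩ | ⟨i, rfl⟩
    · exact Or.inl ⟨x, rfl⟩
    · exact Or.inr ⟨i, rfl⟩
  choose cc hccard hcdec using
    fun (m : p.support) => monomial_step (F := F) m.1 (coeff m.1 p) (hm m.1 m.2)
  have hbound : ∀ (m : p.support) (i : ZZ), (cc m i).support.card ≤ d := by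
    intro m i
    refine (hccard m i).trans ?_
    have h1 : m.1 (Sum.inr (Sum.inl i)) ≤ m.1.sum fun _ e => e := by
      by_cases h : Sum.inr (Sum.inl i) ∈ m.1.support
      · exact Finset.single_le_sum (fun v _ => Nat.zero_le _) h
      · simp [Finsupp.notMem_support_iff.mp h]
    exact h1.trans ((le_totalDegree m.2).trans hdeg)
  have hp : p = ∑ m ∈ p.support.attach, monomial m.1 (coeff m.1 p) := by
    rw [Finset.sum_attach p.support fun m => monomial m (coeff m p),
      support_sum_monomial_coeff]
  refine ⟨fun i => ∑ m ∈ p.support.attach, cc m i, ?_, ?_⟩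
  · intro i
    calc _ ≤ ∑ m ∈ p.support.attach, (cc m i).support.card := card_support_sum_le _ _
      _ ≤ ∑ _m ∈ p.support.attach, d := Finset.sum_le_sum fun m _ => hbound m i
      _ = p.support.card * d := by simp [Finset.sum_const, Finset.card_attach, mul_comm]
      _ ≤ s * d := Nat.mul_le_mul_right d hsparse
  · calc p = ∑ m ∈ p.support.attach, monomial m.1 (coeff m.1 p) := hp
      _ = ∑ m ∈ p.support.attach, (rename swapZW (monomial m.1 (coeff m.1 p)) +
            ∑ i : ZZ, cc m i * (X (Sum.inr (Sum.inl i)) - X (Sum.inr (Sum.inr i)))) :=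
          Finset.sum_congr rfl fun m _ => hcdec m
      _ = rename swapZW p +
            ∑ i : ZZ, (∑ m ∈ p.support.attach, cc m i) *
              (X (Sum.inr (Sum.inl i)) - X (Sum.inr (Sum.inr i))) := by
          rw [Finset.sum_add_distrib]
          congr 1
          · rw [← map_sum, ← hp]
          · rw [Finset.sum_comm]
            exact Finset.sum_congr rfl fun i _ => (Finset.sum_mul _ _ _).symm

end Mon

/-- Nonmonotone normal-form lemma: replacing each `Z_i` by a fresh
variable `W_i` and adding the axioms `Z_i − W_i` yields a set `P'` in `z`-normal form
that is equisatisfiable with `P`, and from which each `p ∈ P` has a derivation with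
sparse coefficients. -/
theorem stmt_4 (F : Type) [Field F] (X Z : Type) [Fintype X] [Fintype Z]
    (P : Finset (MvPolynomial (X ⊕ Z ⊕ Z) F)) (d s : ℕ)
    -- each p ∈ P uses only the X-variables and the first Z-copy
    (hsupp : ∀ p ∈ P, p ∈ MvPolynomial.supported F
      (Set.range (Sum.inl : X → X ⊕ Z ⊕ Z) ∪
        Set.range ((Sum.inr ∘ Sum.inl) : Z → X ⊕ Z ⊕ Z)))
    (hdeg : ∀ p ∈ P, p.totalDegree ≤ d)
    (hsparse : ∀ p ∈ P, p.support.card ≤ s) :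
    -- (1) P' is in z-normal form:
    -- each p* contains no Z_i-variable,
    (∀ p ∈ P, MvPolynomial.rename swapZW p ∈ MvPolynomial.supported F
      (Set.range (Sum.inl : X → X ⊕ Z ⊕ Z) ∪
        Set.range ((Sum.inr ∘ Sum.inr) : Z → X ⊕ Z ⊕ Z))) ∧
    -- and each Z_i − W_i has the form q + Z_i · q' with q, q' free of Z-variables,
    (∀ i : Z, ∃ q q' : MvPolynomial (X ⊕ Z ⊕ Z) F,
      q ∈ MvPolynomial.supported F
        (Set.range (Sum.inl : X → X ⊕ Z ⊕ Z) ∪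
          Set.range ((Sum.inr ∘ Sum.inr) : Z → X ⊕ Z ⊕ Z)) ∧
      q' ∈ MvPolynomial.supported F
        (Set.range (Sum.inl : X → X ⊕ Z ⊕ Z) ∪
          Set.range ((Sum.inr ∘ Sum.inr) : Z → X ⊕ Z ⊕ Z)) ∧
      MvPolynomial.X (Sum.inr (Sum.inl i)) - MvPolynomial.X (Sum.inr (Sum.inr i))
        = q + MvPolynomial.X (Sum.inr (Sum.inl i)) * q') ∧
    -- (2) equisatisfiability for every Boolean assignment α to the Z-variables:
    (∀ α : Z → Bool,
      (∃ x : X → Bool, ∀ p ∈ P,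
        MvPolynomial.eval
          (Sum.elim (fun v => boolToField F (x v))
            (Sum.elim (fun i => boolToField F (α i)) (fun _ => (0 : F)))) p = 0) ↔
      (∃ (x : X → Bool) (wv : Z → F),
        (∀ p ∈ P,
          MvPolynomial.eval
            (Sum.elim (fun v => boolToField F (x v))
              (Sum.elim (fun i => boolToField F (α i)) wv))
            (MvPolynomial.rename swapZW p) = 0) ∧
        (∀ i : Z,
          MvPolynomial.eval
            (Sum.elim (fun v => boolToField F (x v))
              (Sum.elim (fun i' => boolToField F (α i')) wv))
            (MvPolynomial.X (Sum.inr (Sum.inl i)) -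
              MvPolynomial.X (Sum.inr (Sum.inr i))) = 0))) ∧
    -- (3) each p ∈ P is derivable from P' with coefficients of sparsity ≤ s·d:
    (∀ p ∈ P, ∃ c : Z → MvPolynomial (X ⊕ Z ⊕ Z) F,
      (∀ i, (c i).support.card ≤ s * d) ∧
      p = MvPolynomial.rename swapZW p +
        ∑ i : Z, c i *
          (MvPolynomial.X (Sum.inr (Sum.inl i)) -
            MvPolynomial.X (Sum.inr (Sum.inr i)))) := by
  classical
  refine ⟨?_, ?_, ?_, ?_⟩
  · -- (1a)
    intro p hp
    rw [MvPolynomial.mem_supported]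
    intro v hv
    obtain ⟨u, hu, rfl⟩ := Finset.mem_image.mp (MvPolynomial.vars_rename swapZW p hv)
    have hu2 := (MvPolynomial.mem_supported.mp (hsupp p hp)) hu
    rcases hu2 with ⟨x, rfl⟩ | ⟨i, rfl⟩
    · exact Or.inl ⟨x, rfl⟩
    · exact Or.inr ⟨i, rfl⟩
  · -- (1b)
    intro i
    refine ⟨-(MvPolynomial.X (Sum.inr (Sum.inr i))), 1, ?_, ?_, by ring⟩
    · apply neg_mem
      rw [MvPolynomial.mem_supported]
      intro v hv
      rw [MvPolynomial.vars_X, Finset.coe_singleton, Set.mem_singleton_iff] at hv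
      subst hv
      exact Or.inr ⟨i, rfl⟩
    · exact one_mem _
  · -- (2)
    intro α
    constructor
    · rintro ⟨x, hx⟩
      refine ⟨x, fun i => boolToField F (α i), ?_, ?_⟩
      · intro p hp
        rw [MvPolynomial.eval_rename]
        rw [eval_congr_supported p _ (hsupp p hp) _
          (Sum.elim (fun v => boolToField F (x v))
            (Sum.elim (fun i => boolToField F (α i)) fun _ => (0 : F)))
          (by rintro v (⟨x', rfl⟩ | ⟨i, rfl⟩) <;> rfl)]
        exact hx p hp
      · intro i
        simp
    · rintro ⟨x, wv, hP', hW⟩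
      refine ⟨x, fun p hp => ?_⟩
      have hwv : ∀ i, wv i = boolToField F (α i) := by
        intro i
        have h := hW i
        rw [map_sub, MvPolynomial.eval_X, MvPolynomial.eval_X] at h
        exact (sub_eq_zero.mp h).symm
      have h0 := hP' p hp
      rw [MvPolynomial.eval_rename] at h0
      rw [← h0]
      refine eval_congr_supported p _ (hsupp p hp) _ _ ?_
      rintro v (⟨x', rfl⟩ | ⟨i, rfl⟩)
      · rfl
      · exact (hwv i).symm
  · -- (3)
    intro p hp
    exact part3 p d s (hsupp p hp) (hdeg p hp) (hsparse p hp)
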